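/- Let n ≥ 1, m ∈ ℕ ∪ {0}, 0 ≤ α < n, 0 < δ < 1 with mδ < n − α, α̃ = mδ + α, and let 1 < r ≤ ∞ satisfy α̃ − n < δ < α̃ − n/r (with n/∞ = 0). Set δ̃ = δ, w ≡ 1 and v(x) = |x|^(n/r − α̃ + δ). Then the pair (v,w) satisfies the local condition (L) for some finite constant, but it fails the global condition (G): for every R > 0 and the ball B = B(0,R), ∫_{ℝⁿ∖B} v(y)^{r'} |y|^{−r'(n−α̃+δ)} dy = ∫_{|y|>R} |y|^{−n} dy = ∞. In particular, (v,w) does not belong to H(r, α̃, δ), so when δ̃ = δ the class H(r, α̃, δ̃) is not characterized by the local condition alone. -/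

import Mathlib

open MeasureTheory Metric ENNReal NNReal

noncomputable section

/-- Euclidean space `ℝⁿ`. -/
abbrev E (n : ℕ) := EuclideanSpace ℝ (Fin n)

/-- `(∫ f^p dμ)^(1/p)` for finite `p`, and the essential supremum for `p = ∞`. -/
noncomputable def eN {n : ℕ} (p : ℝ≥0∞) (f : E n → ℝ≥0∞) (μ : Measure (E n)) : ℝ≥0∞ :=
  if p = ∞ then essSup f μ else (∫⁻ y, f y ^ p.toReal ∂μ) ^ (1 / p.toReal)

/-- The two-weight class `H(r, αt, δt)` with constant `C`, where `r'` denotes the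
conjugate exponent of `r` (so the `r = 1`, `r' = ∞` case is the essential supremum,
built into `eN`). -/
def Hclass (n : ℕ) (r' : ℝ≥0∞) (αt δ δt : ℝ) (v w : E n → ℝ≥0∞) (C : ℝ≥0∞) : Prop :=
  ∀ (c : E n) (R : ℝ), 0 < R →
    essSup (fun y => (w y)⁻¹) (volume.restrict (ball c R)) *
        volume (ball c R) ^ ((δ - δt) / (n : ℝ)) *
        eN r' (fun y =>
          v y * (volume (ball c R) ^ ((1 : ℝ) / (n : ℝ)) +
            ENNReal.ofReal (dist c y)) ^ (-((n : ℝ) - αt + δ))) volume ≤ C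

/-- The local condition (L) with constant `C`. -/
def LocalCond (n : ℕ) (r r' : ℝ≥0∞) (αt δt : ℝ) (v w : E n → ℝ≥0∞) (C : ℝ≥0∞) : Prop :=
  ∀ (c : E n) (R : ℝ), 0 < R →
    essSup (fun y => (w y)⁻¹) (volume.restrict (ball c R)) *
        volume (ball c R) ^ ((αt - δt) / (n : ℝ) - r⁻¹.toReal) *
        eN r' v ((volume (ball c R))⁻¹ • volume.restrict (ball c R)) ≤ C

/-- The global condition (G) with constant `C`. -/
def GlobalCond (n : ℕ) (r' : ℝ≥0∞) (αt δ δt : ℝ) (v w : E n → ℝ≥0∞) (C : ℝ≥0∞) : Prop :=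
  ∀ (c : E n) (R : ℝ), 0 < R →
    essSup (fun y => (w y)⁻¹) (volume.restrict (ball c R)) *
        volume (ball c R) ^ ((δ - δt) / (n : ℝ)) *
        eN r' (fun y => v y * (ENNReal.ofReal (dist c y)) ^ (-((n : ℝ) - αt + δ)))
          (volume.restrict ((ball c R)ᶜ)) ≤ C

/-- `b ∈ Λ(δ)` with Lipschitz-`δ` constant `Cb`. -/
def LipDelta {n : ℕ} (δ Cb : ℝ) (b : E n → ℝ) : Prop :=
  ∀ x y : E n, |b x - b y| ≤ Cb * dist x y ^ δ

/-- The size condition `S*_α` with constant `A`. -/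
def SizeCond (n : ℕ) (α A : ℝ) (K : E n → ℝ) : Prop :=
  ∀ x : E n, x ≠ 0 → |K x| ≤ A * ‖x‖ ^ (α - (n : ℝ))

/-- The smoothness condition `H*_{α,∞}` with exponent `γ` and constant `A`. -/
def SmoothCond (n : ℕ) (α γ A : ℝ) (K : E n → ℝ) : Prop :=
  ∀ x x' y : E n, 2 * dist x x' ≤ dist x y →
    |K (x - y) - K (x' - y)| + |K (y - x) - K (y - x')| ≤
      A * dist x x' ^ γ / dist x y ^ ((n : ℝ) - α + γ)

-- helper: antitone rpow in base (ENNReal, nonpos exponent)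
lemma my_rpow_anti {x y : ℝ≥0∞} (h : x ≤ y) {s : ℝ} (hs : s ≤ 0) : y ^ s ≤ x ^ s := by
  calc y ^ s = (y ^ (-s))⁻¹ := by rw [← ENNReal.rpow_neg, neg_neg]
    _ ≤ (x ^ (-s))⁻¹ := ENNReal.inv_le_inv.mpr (ENNReal.rpow_le_rpow h (neg_nonneg.mpr hs))
    _ = x ^ s := by rw [← ENNReal.rpow_neg, neg_neg]

-- helper: upper bound (ofReal x)^s ≤ ofReal (a^s) when 0 < a ≤ x, s ≤ 0
lemma my_rpow_upper {a x s : ℝ} (ha : 0 < a) (hax : a ≤ x) (hs : s ≤ 0) :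
    (ENNReal.ofReal x) ^ s ≤ ENNReal.ofReal (a ^ s) := by
  have hx : 0 < x := ha.trans_le hax
  rw [ENNReal.ofReal_rpow_of_pos hx]
  exact ENNReal.ofReal_le_ofReal (Real.rpow_le_rpow_of_nonpos ha hax hs)

-- helper: lower bound ofReal (b^s) ≤ (ofReal x)^s when 0 < x ≤ b, s ≤ 0
lemma my_rpow_lower {b x s : ℝ} (hx : 0 < x) (hxb : x ≤ b) (hs : s ≤ 0) :
    ENNReal.ofReal (b ^ s) ≤ (ENNReal.ofReal x) ^ s := by
  rw [ENNReal.ofReal_rpow_of_pos hx]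
  exact ENNReal.ofReal_le_ofReal (Real.rpow_le_rpow_of_nonpos hx hxb hs)

lemma my_tail (n : ℕ) (hn : 1 ≤ n) {R : ℝ} (hR : 0 < R) :
    ∫⁻ y in (ball (0 : E n) R)ᶜ, (ENNReal.ofReal ‖y‖) ^ (-(n:ℝ)) ∂volume = ∞ := by
  have hnt : Nontrivial (E n) :=
    Module.nontrivial_of_finrank_pos (R := ℝ) (by rw [finrank_euclideanSpace_fin]; omega)
  set ι := volume (ball (0 : E n) 1) with hι
  have hι0 : ι ≠ 0 := (measure_ball_pos volume 0 one_pos).ne'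
  have hιt : ι ≠ ∞ := measure_ball_lt_top.ne
  set g : E n → ℝ≥0∞ := fun y => (ENNReal.ofReal ‖y‖) ^ (-(n:ℝ)) with hg
  set A : ℕ → Set (E n) := fun k => ball (0:E n) (2^(k+1) * R) \ ball 0 (2^k * R) with hA
  have hAm : ∀ k, MeasurableSet (A k) := fun k => measurableSet_ball.diff measurableSet_ball
  have hposk : ∀ k : ℕ, (0:ℝ) < 2^k * R := fun k => by positivity
  have hballs : ∀ k : ℕ, volume (ball (0:E n) (2^k * R))
      = ENNReal.ofReal ((2^k*R)^n) * ι := fun k => by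
    rw [Measure.addHaar_ball volume _ (hposk k).le, finrank_euclideanSpace_fin]
  have hvol : ∀ k, volume (A k)
      = (ENNReal.ofReal ((2^(k+1)*R)^n) - ENNReal.ofReal ((2^k*R)^n)) * ι := by
    intro k
    rw [hA]
    simp only
    rw [measure_diff (ball_subset_ball (by have h := hposk k; linarith [(by ring : (2:ℝ)^(k+1)*R = 2*(2^k*R))]))
      measurableSet_ball.nullMeasurableSet measure_ball_lt_top.ne, hballs, hballs,
      ← ENNReal.sub_mul (fun _ _ => hιt)]
  set c0 : ℝ≥0∞ := ENNReal.ofReal (1 - (1/2:ℝ)^n) * ι with hc0def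
  have hhalf : (1/2:ℝ)^n < 1 := pow_lt_one₀ (by norm_num) (by norm_num) (by omega)
  have hc0 : c0 ≠ 0 := by
    apply mul_ne_zero _ hι0
    simp only [ne_eq, ENNReal.ofReal_eq_zero, not_le]
    linarith
  have key : ∀ k, c0 ≤ ∫⁻ y in A k, g y ∂volume := by
    intro k
    have hreal : (2^(k+1)*R)^(-(n:ℝ)) * ((2^(k+1)*R)^n - (2^k*R)^n) = 1 - (1/2:ℝ)^n := by
      have h2 : (2:ℝ)^(k+1)*R = 2*(2^k*R) := by ring
      have hpos := hposk k
      rw [h2, Real.rpow_neg (by positivity), Real.rpow_natCast]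
      have hne : ((2*(2^k*R))^n : ℝ) ≠ 0 := by positivity
      field_simp
      have h12 : (1/2:ℝ)^n * 2^n = 1 := by rw [← mul_pow]; norm_num
      linear_combination (R^n * 2^(k*n)) * h12
    calc c0 = ENNReal.ofReal ((2^(k+1)*R)^(-(n:ℝ))) * volume (A k) := by
          rw [hvol, hc0def, ← ENNReal.ofReal_sub _ (by positivity), ← mul_assoc,
            ← ENNReal.ofReal_mul (by positivity), hreal]
      _ = ∫⁻ _ in A k, ENNReal.ofReal ((2^(k+1)*R)^(-(n:ℝ))) ∂volume :=
          (setLIntegral_const _ _).symm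
      _ ≤ ∫⁻ y in A k, g y ∂volume := by
          apply setLIntegral_mono' (hAm k)
          intro y hy
          have h1 : ‖y‖ < 2^(k+1)*R := mem_ball_zero_iff.mp hy.1
          have h2 : 2^k*R ≤ ‖y‖ := le_of_not_gt (fun h => hy.2 (mem_ball_zero_iff.mpr h))
          exact my_rpow_lower (lt_of_lt_of_le (hposk k) h2) h1.le (neg_nonpos.mpr (Nat.cast_nonneg n))
  have hdisj : Pairwise (Function.onFun Disjoint A) := by
    intro i j hij
    wlog h : i < j generalizing i j
    · exact (this hij.symm (by omega)).symm
    refine Set.disjoint_left.mpr fun y hyi hyj => ?_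
    have h1 : ‖y‖ < 2^(i+1)*R := mem_ball_zero_iff.mp hyi.1
    have h2 : 2^j*R ≤ ‖y‖ := le_of_not_gt (fun hh => hyj.2 (mem_ball_zero_iff.mpr hh))
    have : (2:ℝ)^(i+1) ≤ 2^j := pow_le_pow_right₀ (by norm_num) (by omega)
    nlinarith
  have hsub : (⋃ k, A k) ⊆ (ball (0:E n) R)ᶜ := by
    rintro y hy hmem
    obtain ⟨k, hk⟩ := Set.mem_iUnion.mp hy
    have h2 : 2^k*R ≤ ‖y‖ := le_of_not_gt (fun hh => hk.2 (mem_ball_zero_iff.mpr hh))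
    have h3 : ‖y‖ < R := mem_ball_zero_iff.mp hmem
    have : (1:ℝ) ≤ 2^k := one_le_pow₀ (by norm_num : (1:ℝ) ≤ 2)
    nlinarith
  refine top_le_iff.mp ?_
  calc (⊤:ℝ≥0∞) = ∑' _ : ℕ, c0 := (ENNReal.tsum_const_eq_top_of_ne_zero hc0).symm
    _ ≤ ∑' k, ∫⁻ y in A k, g y ∂volume := ENNReal.tsum_le_tsum key
    _ = ∫⁻ y in ⋃ k, A k, g y ∂volume := (lintegral_iUnion hAm hdisj g).symm
    _ ≤ ∫⁻ y in (ball (0:E n) R)ᶜ, g y ∂volume := lintegral_mono_set hsub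

lemma my_ball (n : ℕ) (hn : 1 ≤ n) {s : ℝ} (hns : -(n:ℝ) < s) (hs0 : s < 0) :
    ∃ K : ℝ≥0∞, K ≠ ∞ ∧ ∀ (c : E n) (R : ℝ), 0 < R →
      ∫⁻ y in ball c R, (ENNReal.ofReal ‖y‖) ^ s ∂volume
        ≤ K * (ENNReal.ofReal R) ^ ((n:ℝ) + s) := by
  have hnt : Nontrivial (E n) :=
    Module.nontrivial_of_finrank_pos (R := ℝ) (by rw [finrank_euclideanSpace_fin]; omega)
  set ι := volume (ball (0 : E n) 1) with hι
  have hι0 : ι ≠ 0 := (measure_ball_pos volume 0 one_pos).ne'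
  have hιt : ι ≠ ∞ := measure_ball_lt_top.ne
  set g : E n → ℝ≥0∞ := fun y => (ENNReal.ofReal ‖y‖) ^ s with hg
  set w : ℝ≥0∞ := ENNReal.ofReal ((1/2:ℝ) ^ ((n:ℝ)+s)) with hwdef
  have hw1 : w < 1 := by
    rw [hwdef]
    exact ENNReal.ofReal_lt_one.mpr (Real.rpow_lt_one (by norm_num) (by norm_num) (by linarith))
  have hwne : (1 - w)⁻¹ ≠ ∞ := ENNReal.inv_ne_top.mpr (tsub_pos_of_lt hw1).ne'
  refine ⟨ι * ENNReal.ofReal ((1/2:ℝ)^s) * (1 - w)⁻¹ + ι, ?_, ?_⟩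
  · exact ENNReal.add_ne_top.mpr ⟨ENNReal.mul_ne_top
      (ENNReal.mul_ne_top hιt ENNReal.ofReal_ne_top) hwne, hιt⟩
  intro c R hR
  have hballvol : ∀ ρ : ℝ, 0 ≤ ρ → ∀ x : E n, volume (ball x ρ) = ENNReal.ofReal (ρ^n) * ι :=
    fun ρ hρ x => by rw [Measure.addHaar_ball volume x hρ, finrank_euclideanSpace_fin]
  -- the diff part
  have hdiff : ∫⁻ y in ball c R \ ball (0:E n) R, g y ∂volume
      ≤ ι * (ENNReal.ofReal R) ^ ((n:ℝ)+s) := by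
    calc ∫⁻ y in ball c R \ ball (0:E n) R, g y ∂volume
        ≤ ∫⁻ _ in ball c R \ ball (0:E n) R, ENNReal.ofReal (R^s) ∂volume := by
          apply setLIntegral_mono' (measurableSet_ball.diff measurableSet_ball)
          intro y hy
          have h2 : R ≤ ‖y‖ := le_of_not_gt (fun h => hy.2 (mem_ball_zero_iff.mpr h))
          exact my_rpow_upper hR h2 hs0.le
      _ = ENNReal.ofReal (R^s) * volume (ball c R \ ball (0:E n) R) := setLIntegral_const _ _
      _ ≤ ENNReal.ofReal (R^s) * volume (ball c R) :=
          mul_le_mul_right (measure_mono Set.diff_subset) _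
      _ = ι * (ENNReal.ofReal R) ^ ((n:ℝ)+s) := by
          rw [hballvol R hR.le c, ← mul_assoc, ← ENNReal.ofReal_mul (by positivity),
            ← Real.rpow_natCast R n, ← Real.rpow_add hR, mul_comm (ENNReal.ofReal _) ι,
            ENNReal.ofReal_rpow_of_pos hR, add_comm s]
  -- the central part, via dyadic annuli
  set D : ℕ → Set (E n) := fun k =>
    ball (0:E n) ((1/2)^k * R) \ ball (0:E n) ((1/2)^(k+1) * R) with hD
  have hcov : ball (0:E n) R \ {0} ⊆ ⋃ k, D k := by
    rintro y ⟨hyR, hy0⟩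
    have hy : 0 < ‖y‖ := norm_pos_iff.mpr hy0
    have hyR' : ‖y‖ < R := mem_ball_zero_iff.mp hyR
    have hex : ∃ k:ℕ, (1/2:ℝ)^k * R ≤ ‖y‖ := by
      obtain ⟨k, hk⟩ := exists_pow_lt_of_lt_one (div_pos hy hR) (by norm_num : (1/2:ℝ) < 1)
      exact ⟨k, le_of_lt ((lt_div_iff₀ hR).mp hk)⟩
    classical
    have hk0 := Nat.find_spec hex
    have hk0ne : Nat.find hex ≠ 0 := by
      intro h
      rw [h] at hk0
      simp at hk0
      linarith
    obtain ⟨j, hj⟩ : ∃ j, Nat.find hex = j + 1 := ⟨Nat.find hex - 1, by omega⟩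
    have hmin : ¬((1/2:ℝ)^j * R ≤ ‖y‖) := Nat.find_min hex (by omega)
    refine Set.mem_iUnion.mpr ⟨j, mem_ball_zero_iff.mpr (lt_of_not_ge hmin), fun hmem => ?_⟩
    have := mem_ball_zero_iff.mp hmem
    rw [hj] at hk0
    linarith
  have hterm : ∀ k : ℕ, ∫⁻ y in D k, g y ∂volume ≤
      ι * ENNReal.ofReal ((1/2:ℝ)^s) * (ENNReal.ofReal R) ^ ((n:ℝ)+s) * w ^ k := by
    intro k
    have hpk : (0:ℝ) < (1/2)^(k+1) * R := by positivity
    have hpk' : (0:ℝ) ≤ (1/2:ℝ)^k * R := by positivity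
    have hreal : ((1/2:ℝ)^(k+1)*R)^s * ((1/2:ℝ)^k*R)^n
        = (1/2:ℝ)^s * (R^((n:ℝ)+s) * ((1/2:ℝ)^((n:ℝ)+s))^k) := by
      have hhalf : (0:ℝ) < 1/2 := by norm_num
      have h2 : ∀ (m : ℕ) (t : ℝ), (((1/2:ℝ))^m) ^ t = (1/2:ℝ) ^ ((m:ℝ)*t) := fun m t => by
        rw [← Real.rpow_natCast (1/2:ℝ) m, ← Real.rpow_mul hhalf.le]
      have h3 : ∀ (t : ℝ) (m : ℕ), ((1/2:ℝ)^t)^m = (1/2:ℝ)^(t*(m:ℝ)) := fun t m => by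
        rw [← Real.rpow_natCast ((1/2:ℝ)^t) m, ← Real.rpow_mul hhalf.le]
      have e1 : ((1/2:ℝ)^(k+1)*R)^s = (1/2:ℝ)^(((k:ℝ)+1)*s) * R^s := by
        rw [Real.mul_rpow (by positivity) hR.le, ← Real.rpow_natCast (1/2:ℝ) (k+1),
          ← Real.rpow_mul hhalf.le]
        push_cast
        ring_nf
      have e2 : ((1/2:ℝ)^k*R)^n = (1/2:ℝ)^((k:ℝ)*(n:ℝ)) * R^((n:ℝ)) := by
        rw [mul_pow, ← pow_mul, ← Real.rpow_natCast (1/2:ℝ) (k*n), ← Real.rpow_natCast R n]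
        push_cast
        ring_nf
      calc ((1/2:ℝ)^(k+1)*R)^s * ((1/2:ℝ)^k*R)^n
          = (1/2:ℝ)^(((k:ℝ)+1)*s + (k:ℝ)*(n:ℝ)) * R^(s + (n:ℝ)) := by
            rw [e1, e2, Real.rpow_add hhalf, Real.rpow_add hR]
            ring
        _ = (1/2:ℝ)^(s + ((n:ℝ)+s)*(k:ℝ)) * R^((n:ℝ)+s) := by
            rw [show ((k:ℝ)+1)*s + (k:ℝ)*(n:ℝ) = s + ((n:ℝ)+s)*(k:ℝ) from by ring,
              add_comm s (n:ℝ)]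
        _ = (1/2:ℝ)^s * (R^((n:ℝ)+s) * ((1/2:ℝ)^((n:ℝ)+s))^k) := by
            rw [Real.rpow_add hhalf, h3]
            ring
    calc ∫⁻ y in D k, g y ∂volume
        ≤ ∫⁻ _ in D k, ENNReal.ofReal (((1/2:ℝ)^(k+1)*R)^s) ∂volume := by
          apply setLIntegral_mono' (measurableSet_ball.diff measurableSet_ball)
          intro y hy
          exact my_rpow_upper hpk
            (le_of_not_gt fun h => hy.2 (mem_ball_zero_iff.mpr h)) hs0.le
      _ = ENNReal.ofReal (((1/2:ℝ)^(k+1)*R)^s) * volume (D k) := setLIntegral_const _ _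
      _ ≤ ENNReal.ofReal (((1/2:ℝ)^(k+1)*R)^s) * volume (ball (0:E n) ((1/2)^k * R)) :=
          mul_le_mul_right (measure_mono Set.diff_subset) _
      _ = ENNReal.ofReal (((1/2:ℝ)^(k+1)*R)^s * ((1/2:ℝ)^k*R)^n) * ι := by
          rw [hballvol _ hpk' _, ← mul_assoc, ← ENNReal.ofReal_mul (by positivity)]
      _ = ι * ENNReal.ofReal ((1/2:ℝ)^s) * (ENNReal.ofReal R) ^ ((n:ℝ)+s) * w ^ k := by
          rw [hreal, hwdef, ENNReal.ofReal_mul (by positivity),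
            ENNReal.ofReal_mul (by positivity), ← ENNReal.ofReal_pow (by positivity),
            ENNReal.ofReal_rpow_of_pos hR]
          ring
  -- assemble
  calc ∫⁻ y in ball c R, g y ∂volume
      ≤ ∫⁻ y in ((ball (0:E n) R \ {0}) ∪ {0}) ∪ (ball c R \ ball (0:E n) R), g y ∂volume := by
        apply lintegral_mono_set
        intro y hy
        by_cases h : y ∈ ball (0:E n) R
        · by_cases h0 : y = (0:E n)
          · exact Or.inl (Or.inr h0)
          · exact Or.inl (Or.inl ⟨h, h0⟩)
        · exact Or.inr ⟨hy, h⟩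
    _ ≤ (∫⁻ y in ball (0:E n) R \ {0}, g y ∂volume + ∫⁻ y in ({0} : Set (E n)), g y ∂volume)
        + ∫⁻ y in ball c R \ ball (0:E n) R, g y ∂volume :=
        le_trans (lintegral_union_le _ _ _) (add_le_add_left (lintegral_union_le _ _ _) _)
    _ ≤ (ι * ENNReal.ofReal ((1/2:ℝ)^s) * (1 - w)⁻¹ * (ENNReal.ofReal R) ^ ((n:ℝ)+s) + 0)
        + ι * (ENNReal.ofReal R) ^ ((n:ℝ)+s) := by
        refine add_le_add (add_le_add ?_ ?_) hdiff
        · calc ∫⁻ y in ball (0:E n) R \ {0}, g y ∂volume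
              ≤ ∫⁻ y in ⋃ k, D k, g y ∂volume := lintegral_mono_set hcov
            _ ≤ ∑' k, ∫⁻ y in D k, g y ∂volume := lintegral_iUnion_le _ _
            _ ≤ ∑' k, ι * ENNReal.ofReal ((1/2:ℝ)^s) * (ENNReal.ofReal R) ^ ((n:ℝ)+s) * w ^ k :=
              ENNReal.tsum_le_tsum hterm
            _ = ι * ENNReal.ofReal ((1/2:ℝ)^s) * (ENNReal.ofReal R) ^ ((n:ℝ)+s) * (1 - w)⁻¹ := by
              rw [ENNReal.tsum_mul_left, ENNReal.tsum_geometric]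
            _ = ι * ENNReal.ofReal ((1/2:ℝ)^s) * (1 - w)⁻¹ * (ENNReal.ofReal R) ^ ((n:ℝ)+s) := by
              ring
        · exact le_of_eq (setLIntegral_measure_zero _ _ (measure_singleton 0))
    _ = (ι * ENNReal.ofReal ((1/2:ℝ)^s) * (1 - w)⁻¹ + ι) * (ENNReal.ofReal R) ^ ((n:ℝ)+s) := by
        ring

/-- for `δ̃ = δ` with `α̃ − n < δ < α̃ − n/r`, the pair
`w ≡ 1`, `v(x) = |x|^(n/r − α̃ + δ)` satisfies the local condition (L) but fails the
global condition (G) (the tail integral is infinite on every ball centered at the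
origin), hence does not belong to `H(r, α̃, δ)`. -/
theorem statement4 (n m : ℕ) (α δ αt : ℝ) (r r' : ℝ≥0∞)
    (hn : 1 ≤ n) (hα0 : 0 ≤ α) (hαn : α < (n : ℝ)) (hδ0 : 0 < δ) (hδ1 : δ < 1)
    (hmδ : (m : ℝ) * δ < (n : ℝ) - α) (hαt : αt = (m : ℝ) * δ + α)
    (hr : 1 < r) (hconj : r⁻¹ + r'⁻¹ = 1)
    (hlow : αt - (n : ℝ) < δ) (hhigh : δ < αt - (n : ℝ) * r⁻¹.toReal)
    (v w : E n → ℝ≥0∞)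
    (hv : v = fun x => (ENNReal.ofReal ‖x‖) ^ ((n : ℝ) * r⁻¹.toReal - αt + δ))
    (hw : w = fun _ => 1) :
    (∃ C : ℝ≥0, LocalCond n r r' αt δ v w (C : ℝ≥0∞)) ∧
    (∀ R : ℝ, 0 < R →
      (∫⁻ y in (ball (0 : E n) R)ᶜ,
        (v y * (ENNReal.ofReal ‖y‖) ^ (-((n : ℝ) - αt + δ))) ^ r'.toReal) = ∞) ∧
    (∀ C : ℝ≥0, ¬ Hclass n r' αt δ δ v w (C : ℝ≥0∞)) := by
  have hnt : Nontrivial (E n) :=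
    Module.nontrivial_of_finrank_pos (R := ℝ) (by rw [finrank_euclideanSpace_fin]; omega)
  have hn0 : (n:ℝ) ≠ 0 := Nat.cast_ne_zero.mpr (by omega)
  -- conjugate exponent facts
  have hr0 : r ≠ 0 := fun h => by simp [h] at hr
  have hrinvt : r⁻¹ ≠ ∞ := ENNReal.inv_ne_top.mpr hr0
  have hrinv1 : r⁻¹ < 1 := ENNReal.inv_lt_one.mpr hr
  have hr'inv : r'⁻¹ = 1 - r⁻¹ := by
    rw [← hconj, ENNReal.add_sub_cancel_left hrinvt]
  have hr'invne : r'⁻¹ ≠ 0 := by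
    rw [hr'inv]
    exact (tsub_pos_of_lt hrinv1).ne'
  have hr't : r' ≠ ∞ := by
    intro h
    rw [h] at hr'invne
    simp at hr'invne
  have hr'0 : r' ≠ 0 := by
    intro h
    rw [h] at hconj
    simp [ENNReal.add_eq_top] at hconj
  have hq0 : 0 < r'.toReal := ENNReal.toReal_pos hr'0 hr't
  have hsum : r⁻¹.toReal + (r'.toReal)⁻¹ = 1 := by
    have h := congrArg ENNReal.toReal hconj
    rw [ENNReal.toReal_add hrinvt (ENNReal.inv_ne_top.mpr hr'0), ENNReal.toReal_inv] at h
    simpa using h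
  have hbq : r⁻¹.toReal * r'.toReal = r'.toReal - 1 := by
    have h := congrArg (fun x => x * r'.toReal) hsum
    simp only [add_mul, one_mul, inv_mul_cancel₀ hq0.ne'] at h
    linarith
  have ha0 : (n:ℝ) * r⁻¹.toReal - αt + δ < 0 := by linarith
  have hs0 : ((n:ℝ) * r⁻¹.toReal - αt + δ) * r'.toReal < 0 :=
    mul_neg_of_neg_of_pos ha0 hq0
  have hsn : -(n:ℝ) < ((n:ℝ) * r⁻¹.toReal - αt + δ) * r'.toReal := by
    nlinarith [hbq, mul_pos hq0 (show (0:ℝ) < (n:ℝ) - αt + δ by linarith)]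
  have hexp1 : (((n:ℝ) * r⁻¹.toReal - αt + δ) + -((n:ℝ) - αt + δ)) * r'.toReal = -(n:ℝ) := by
    linear_combination (n:ℝ) * hbq
  set ι := volume (ball (0 : E n) 1) with hι
  have hι0 : ι ≠ 0 := (measure_ball_pos volume 0 one_pos).ne'
  have hιt : ι ≠ ∞ := measure_ball_lt_top.ne
  refine ⟨?_, ?_, ?_⟩
  · -- Part 1: local condition
    obtain ⟨K, hKt, hKb⟩ := my_ball n hn hsn hs0
    set P := (αt - δ) / (n:ℝ) - r⁻¹.toReal with hP
    set C0 := ι ^ P * (ι⁻¹ * K) ^ (1/r'.toReal) with hC0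
    have hιKt : ι⁻¹ * K ≠ ∞ := ENNReal.mul_ne_top (ENNReal.inv_ne_top.mpr hι0) hKt
    have hC0t : C0 ≠ ∞ := by
      apply ENNReal.mul_ne_top
      · simp [ENNReal.rpow_eq_top_iff, hι0, hιt]
      · intro h
        rcases ENNReal.rpow_eq_top_iff.mp h with ⟨_, h2⟩ | ⟨h1, _⟩
        · exact absurd h2 (not_lt.mpr (by positivity))
        · exact hιKt h1
    refine ⟨C0.toNNReal, ?_⟩
    intro c R hR
    rw [ENNReal.coe_toNNReal hC0t]
    have hres : (volume.restrict (ball c R)) ≠ 0 := by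
      rw [Ne, Measure.restrict_eq_zero]
      exact (measure_ball_pos volume c hR).ne'
    rw [hw]
    simp only [inv_one]
    rw [essSup_const _ hres, one_mul]
    simp only [eN, if_neg hr't, lintegral_smul_measure]
    simp only [hv, ← ENNReal.rpow_mul]
    set X := ENNReal.ofReal R with hXdef
    have hX0 : X ≠ 0 := (ENNReal.ofReal_pos.mpr hR).ne'
    have hXt : X ≠ ∞ := ENNReal.ofReal_ne_top
    have hXn0 : X ^ ((n:ℝ)) ≠ 0 := by simp [ENNReal.rpow_eq_zero_iff, hX0, hXt]
    have hXnt : X ^ ((n:ℝ)) ≠ ⊤ := by simp [ENNReal.rpow_eq_top_iff, hX0, hXt]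
    have hXst : X ^ (((n:ℝ) * r⁻¹.toReal - αt + δ) * r'.toReal) ≠ ⊤ := by
      simp [ENNReal.rpow_eq_top_iff, hX0, hXt]
    have hμB : volume (ball c R) = X ^ ((n:ℝ)) * ι := by
      rw [Measure.addHaar_ball volume c hR.le, finrank_euclideanSpace_fin,
        ← Real.rpow_natCast R n, ← ENNReal.ofReal_rpow_of_pos hR]
    calc volume (ball c R) ^ P *
          ((volume (ball c R))⁻¹ *
            ∫⁻ y in ball c R,
              (ENNReal.ofReal ‖y‖) ^ (((n:ℝ) * r⁻¹.toReal - αt + δ) * r'.toReal) ∂volume)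
            ^ (1/r'.toReal)
        ≤ volume (ball c R) ^ P *
          ((volume (ball c R))⁻¹ *
            (K * X ^ ((n:ℝ) + ((n:ℝ) * r⁻¹.toReal - αt + δ) * r'.toReal))) ^ (1/r'.toReal) := by
          gcongr
          exact hKb c R hR
      _ = C0 := by
          rw [hμB, ENNReal.mul_inv (Or.inl hXn0) (Or.inl hXnt), ← ENNReal.rpow_neg,
            show X ^ (-(n:ℝ)) * ι⁻¹ *
                (K * X ^ ((n:ℝ) + ((n:ℝ) * r⁻¹.toReal - αt + δ) * r'.toReal))
              = (ι⁻¹ * K) * (X ^ (-(n:ℝ)) *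
                X ^ ((n:ℝ) + ((n:ℝ) * r⁻¹.toReal - αt + δ) * r'.toReal)) from by ring,
            ← ENNReal.rpow_add _ _ hX0 hXt,
            show -(n:ℝ) + ((n:ℝ) + ((n:ℝ) * r⁻¹.toReal - αt + δ) * r'.toReal)
              = ((n:ℝ) * r⁻¹.toReal - αt + δ) * r'.toReal from by ring,
            ENNReal.mul_rpow_of_ne_top hιKt hXst, ← ENNReal.rpow_mul,
            ENNReal.mul_rpow_of_ne_top hXnt hιt, ← ENNReal.rpow_mul,
            show X ^ ((n:ℝ) * P) * ι ^ P *
                ((ι⁻¹ * K) ^ (1/r'.toReal) *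
                  X ^ (((n:ℝ) * r⁻¹.toReal - αt + δ) * r'.toReal * (1/r'.toReal)))
              = (ι ^ P * (ι⁻¹ * K) ^ (1/r'.toReal)) *
                (X ^ ((n:ℝ) * P) *
                  X ^ (((n:ℝ) * r⁻¹.toReal - αt + δ) * r'.toReal * (1/r'.toReal))) from by ring,
            ← ENNReal.rpow_add _ _ hX0 hXt,
            show (n:ℝ) * P + ((n:ℝ) * r⁻¹.toReal - αt + δ) * r'.toReal * (1/r'.toReal) = 0
              from by rw [hP]; field_simp; ring,
            ENNReal.rpow_zero, mul_one, hC0]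
  · -- Part 2: the tail integral diverges
    intro R hR
    rw [setLIntegral_congr_fun (measurableSet_ball.compl) ?_]
    · exact my_tail n hn hR
    intro y hy
    have hyR : R ≤ ‖y‖ := le_of_not_gt (fun h => hy (mem_ball_zero_iff.mpr h))
    have hy0 : 0 < ‖y‖ := lt_of_lt_of_le hR hyR
    have hY0 : ENNReal.ofReal ‖y‖ ≠ 0 := (ENNReal.ofReal_pos.mpr hy0).ne'
    have hYt : ENNReal.ofReal ‖y‖ ≠ ∞ := ENNReal.ofReal_ne_top
    rw [hv]
    simp only
    rw [← ENNReal.rpow_add _ _ hY0 hYt]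
    rw [← ENNReal.rpow_mul]
    rw [hexp1]
  · -- Part 3: Hclass fails
    intro C hC
    have hres : (volume.restrict (ball (0:E n) 1)) ≠ 0 := by
      rw [Ne, Measure.restrict_eq_zero]
      exact (measure_ball_pos volume 0 one_pos).ne'
    have h1 := hC 0 1 one_pos
    rw [hw] at h1
    simp only [inv_one] at h1
    rw [essSup_const _ hres, sub_self, zero_div, ENNReal.rpow_zero, one_mul, one_mul] at h1
    simp only [eN, if_neg hr't] at h1
    set T := volume (ball (0:E n) 1) ^ ((1:ℝ)/(n:ℝ)) with hT
    have hTt : T ≠ ⊤ := by simp [hT, ENNReal.rpow_eq_top_iff, hι0, hιt, ← hι]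
    have hTofReal : T = ENNReal.ofReal T.toReal := (ENNReal.ofReal_toReal hTt).symm
    set ρ := max T.toReal 1 with hρdef
    have hρ : (0:ℝ) < ρ := lt_of_lt_of_le one_pos (le_max_right _ _)
    have hρt : T.toReal ≤ ρ := le_max_left _ _
    set c2 := ((2:ℝ≥0∞) ^ (-((n:ℝ) - αt + δ))) ^ r'.toReal with hc2
    have h2t : ((2:ℝ≥0∞) ^ (-((n:ℝ) - αt + δ))) ≠ ⊤ := by
      simp [ENNReal.rpow_eq_top_iff]
    have h20 : ((2:ℝ≥0∞) ^ (-((n:ℝ) - αt + δ))) ≠ 0 := by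
      simp [ENNReal.rpow_eq_zero_iff]
    have hc2t : c2 ≠ ⊤ := by simp [hc2, ENNReal.rpow_eq_top_iff, h2t, h20]
    have hc20 : c2 ≠ 0 := by simp [hc2, ENNReal.rpow_eq_zero_iff, h2t, h20]
    have htop : (∫⁻ y, (v y * (T + ENNReal.ofReal (dist (0:E n) y)) ^ (-((n:ℝ) - αt + δ)))
        ^ r'.toReal ∂volume) = ⊤ := by
      refine top_le_iff.mp ?_
      calc (⊤:ℝ≥0∞) = c2 * ∫⁻ y in (ball (0:E n) ρ)ᶜ,
            (ENNReal.ofReal ‖y‖) ^ (-(n:ℝ)) ∂volume := by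
            rw [my_tail n hn hρ, ENNReal.mul_top hc20]
        _ = ∫⁻ y in (ball (0:E n) ρ)ᶜ,
              c2 * (ENNReal.ofReal ‖y‖) ^ (-(n:ℝ)) ∂volume :=
            (lintegral_const_mul' _ _ hc2t).symm
        _ ≤ ∫⁻ y in (ball (0:E n) ρ)ᶜ,
              (v y * (T + ENNReal.ofReal (dist (0:E n) y)) ^ (-((n:ℝ) - αt + δ)))
                ^ r'.toReal ∂volume := by
            apply setLIntegral_mono' measurableSet_ball.compl
            intro y hy
            have hyρ : ρ ≤ ‖y‖ := le_of_not_gt (fun h => hy (mem_ball_zero_iff.mpr h))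
            have hy0 : 0 < ‖y‖ := lt_of_lt_of_le hρ hyρ
            have hY0 : ENNReal.ofReal ‖y‖ ≠ 0 := (ENNReal.ofReal_pos.mpr hy0).ne'
            have hYt : ENNReal.ofReal ‖y‖ ≠ ∞ := ENNReal.ofReal_ne_top
            have hdist : dist (0:E n) y = ‖y‖ := by rw [dist_comm, dist_zero_right]
            have hTY : T + ENNReal.ofReal ‖y‖ ≤ 2 * ENNReal.ofReal ‖y‖ := by
              rw [hTofReal, two_mul]
              exact add_le_add_left (ENNReal.ofReal_le_ofReal (le_trans hρt hyρ)) _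
            calc c2 * (ENNReal.ofReal ‖y‖) ^ (-(n:ℝ))
                = (v y * (2 * ENNReal.ofReal ‖y‖) ^ (-((n:ℝ) - αt + δ))) ^ r'.toReal := by
                  rw [hv]
                  simp only
                  rw [ENNReal.mul_rpow_of_ne_top (by simp) hYt,
                    show (ENNReal.ofReal ‖y‖) ^ ((n:ℝ) * r⁻¹.toReal - αt + δ) *
                        ((2:ℝ≥0∞) ^ (-((n:ℝ) - αt + δ)) *
                          (ENNReal.ofReal ‖y‖) ^ (-((n:ℝ) - αt + δ)))
                      = (2:ℝ≥0∞) ^ (-((n:ℝ) - αt + δ)) *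
                        ((ENNReal.ofReal ‖y‖) ^ ((n:ℝ) * r⁻¹.toReal - αt + δ) *
                          (ENNReal.ofReal ‖y‖) ^ (-((n:ℝ) - αt + δ))) from by ring,
                    ← ENNReal.rpow_add _ _ hY0 hYt,
                    ENNReal.mul_rpow_of_nonneg _ _ hq0.le, ← ENNReal.rpow_mul (ENNReal.ofReal ‖y‖), hexp1, hc2]
              _ ≤ (v y * (T + ENNReal.ofReal (dist (0:E n) y)) ^ (-((n:ℝ) - αt + δ)))
                    ^ r'.toReal := by
                  rw [hdist]
                  exact ENNReal.rpow_le_rpow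
                    (mul_le_mul_right (my_rpow_anti hTY (by linarith)) _) hq0.le
        _ ≤ _ := setLIntegral_le_lintegral _ _
    rw [htop, ENNReal.top_rpow_of_pos (by positivity)] at h1
    exact absurd (top_le_iff.mp h1) ENNReal.coe_ne_top
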